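/- Let N ≥ 3 and ξ₂, …, ξ_N > 0 with at least one ξ_j irrational. For n ∈ (ℕ⁺)^N set μ_n := n₁² + Σ_{j=2}^N ξ_j n_j². Then inf{ |μ_n − μ_m| : n, m ∈ (ℕ⁺)^N, μ_n ≠ μ_m } = 0. -/

import Mathlib

lemma key (ξ : ℝ) (hξ : 0 < ξ) (hi : Irrational ξ) (ε : ℝ) (hε : 0 < ε) :
    ∃ s t : ℕ, 2 ≤ s ∧ 2 ≤ t ∧ (t : ℝ) ≠ s * ξ ∧ |(t : ℝ) - s * ξ| < ε := by
  set S : AddSubgroup ℝ := AddSubgroup.closure {1, ξ} with hS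
  have hdense : Dense (S : Set ℝ) := by
    rcases S.dense_or_cyclic with h | ⟨a, ha⟩
    · exact h
    · exfalso
      have h1 : (1 : ℝ) ∈ S := AddSubgroup.subset_closure (by simp)
      have hx : ξ ∈ S := AddSubgroup.subset_closure (by simp)
      rw [ha, AddSubgroup.mem_closure_singleton] at h1 hx
      obtain ⟨p, hp⟩ := h1
      obtain ⟨q, hq⟩ := hx
      simp only [zsmul_eq_mul] at hp hq
      have hp0 : (p : ℝ) ≠ 0 := by rintro h; rw [h, zero_mul] at hp; norm_num at hp
      have ha0 : a = 1 / p := by field_simp; linarith [hp]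
      rw [ha0] at hq
      exact hi ⟨(q : ℚ) / (p : ℚ), by push_cast; rw [← hq]; field_simp⟩
  obtain ⟨M0, hM0⟩ := exists_nat_ge (3 / ξ)
  set M : ℕ := max 2 M0 with hM
  have hM2 : 2 ≤ M := le_max_left _ _
  have hMξ : 3 ≤ (M : ℝ) * ξ := by
    have h1 : (3 / ξ) ≤ (M : ℝ) := le_trans hM0 (by exact_mod_cast le_max_right 2 M0)
    calc (3:ℝ) = 3 / ξ * ξ := by field_simp
    _ ≤ M * ξ := by gcongr
  have hMpos : (0 : ℝ) < M := by positivity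
  set δ : ℝ := min ε 1 / M with hδ
  have hδpos : 0 < δ := by positivity
  obtain ⟨g, hgS, hg0, hgδ⟩ : ∃ g ∈ (S : Set ℝ), 0 < g ∧ g < δ := by
    obtain ⟨g, hg, hmem⟩ := hdense.exists_between hδpos
    exact ⟨g, hg, hmem.1, hmem.2⟩
  obtain ⟨a, b, hab⟩ := AddSubgroup.mem_closure_pair.mp hgS
  simp only [zsmul_eq_mul, mul_one] at hab
  have hMδ : (M : ℝ) * δ ≤ min ε 1 := by
    rw [hδ]; field_simp; exact le_rfl
  have hb : b ≠ 0 := by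
    rintro rfl
    simp only [Int.cast_zero, zero_mul, add_zero] at hab
    have h1 : g < 1 := lt_of_lt_of_le hgδ (by
      calc δ = 1 * δ := (one_mul δ).symm
      _ ≤ M * δ := by gcongr; exact_mod_cast le_trans (by norm_num) hM2
      _ ≤ min ε 1 := hMδ
      _ ≤ 1 := min_le_right _ _)
    have h2 : (0:ℝ) < (a:ℝ) := hab ▸ hg0
    have ha1 : (1:ℤ) ≤ a := by exact_mod_cast h2
    have : (1:ℝ) ≤ (a:ℝ) := by exact_mod_cast ha1
    rw [hab] at this; linarith
  set B : ℕ := b.natAbs with hB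
  have hB1 : 1 ≤ B := Int.natAbs_pos.mpr hb
  set e : ℤ := if 0 < b then -(M:ℤ) else (M:ℤ) with he
  have heb : (e:ℝ) * b = -((M:ℝ) * B) := by
    rcases lt_or_ge 0 b with h | h
    · rw [he, if_pos h]
      have : (B:ℤ) = b := Int.natAbs_of_nonneg h.le ▸ rfl
      push_cast [← this]; ring
    · rw [he, if_neg (not_lt.mpr h)]
      have hbneg : b = -(B:ℤ) := by omega
      rw [hbneg]; push_cast; ring
  have habs_e : |(e:ℝ)| = M := by
    rcases lt_or_ge 0 b with h | h
    · rw [he, if_pos h]; push_cast; rw [abs_neg, abs_of_nonneg hMpos.le]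
    · rw [he, if_neg (not_lt.mpr h)]; push_cast; rw [abs_of_nonneg hMpos.le]
  set s : ℕ := M * B with hs
  have hsM : (M:ℝ) ≤ s := by
    rw [hs]; push_cast
    calc (M:ℝ) = M * 1 := (mul_one _).symm
    _ ≤ M * B := by gcongr; exact_mod_cast hB1
  have hkey : (e:ℝ) * g = (e:ℝ) * a - (s:ℝ) * ξ := by
    rw [← hab, mul_add, ← mul_assoc, heb, hs]; push_cast; ring
  have hsmall : |(e:ℝ) * g| < min ε 1 := by
    rw [abs_mul, habs_e, abs_of_pos hg0]
    calc (M:ℝ) * g < M * δ := by gcongr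
    _ ≤ min ε 1 := hMδ
  have hsξ3 : (3:ℝ) ≤ (s:ℝ) * ξ := le_trans hMξ (by gcongr)
  have ht'2 : (2:ℝ) ≤ (e:ℝ) * a := by
    have h1 : -(1:ℝ) < (e:ℝ) * g := by
      have := abs_lt.mp hsmall
      linarith [this.1, min_le_right ε 1]
    nlinarith [hkey]
  have ht'int : (2:ℤ) ≤ e * a := by exact_mod_cast (by push_cast; exact ht'2 : (2:ℝ) ≤ ((e*a : ℤ):ℝ))
  refine ⟨s, (e * a).toNat, ?_, ?_, ?_, ?_⟩
  · calc 2 ≤ M := hM2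
    _ ≤ s := by exact_mod_cast hsM
  · have h0 : ((e * a).toNat : ℤ) = e * a := Int.toNat_of_nonneg (le_trans (by norm_num) ht'int)
    omega
  · have hcast : (((e * a).toNat : ℕ) : ℝ) = (e:ℝ) * a := by
      have h0 : ((e * a).toNat : ℤ) = e * a := Int.toNat_of_nonneg (le_trans (by norm_num) ht'int)
      exact_mod_cast h0
    rw [hcast]
    intro hcontra
    have hs0 : s ≠ 0 := by
      have hp : 0 < M * B := Nat.mul_pos (lt_of_lt_of_le (by norm_num) hM2) hB1
      rw [hs]; exact hp.ne'
    have : Irrational ((s:ℝ) * ξ) := by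
      have := hi.ratCast_mul (q := (s:ℚ)) (by exact_mod_cast hs0)
      simpa using this
    exact this ⟨(e * a : ℤ), by push_cast; exact hcontra⟩
  · have hcast : (((e * a).toNat : ℕ) : ℝ) = (e:ℝ) * a := by
      have h0 : ((e * a).toNat : ℤ) = e * a := Int.toNat_of_nonneg (le_trans (by norm_num) ht'int)
      exact_mod_cast h0
    rw [hcast, ← hkey]
    exact lt_of_lt_of_le hsmall (min_le_left _ _)

theorem stmt_4 (N : ℕ) (hN : 3 ≤ N) (ξ : Fin N → ℝ)
    (hpos : ∀ j : Fin N, j ≠ ⟨0, by omega⟩ → 0 < ξ j)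
    (hirr : ∃ j : Fin N, j ≠ ⟨0, by omega⟩ ∧ Irrational (ξ j))
    (μ : (Fin N → ℕ+) → ℝ)
    (hμ : ∀ n, μ n = (n ⟨0, by omega⟩ : ℝ) ^ 2 +
      ∑ j ∈ Finset.univ.erase (⟨0, by omega⟩ : Fin N), ξ j * (n j : ℝ) ^ 2) :
    sInf {d : ℝ | ∃ n m : Fin N → ℕ+, μ n ≠ μ m ∧ d = |μ n - μ m|} = 0 := by
  set z0 : Fin N := ⟨0, by omega⟩ with hz0
  set A := {d : ℝ | ∃ n m : Fin N → ℕ+, μ n ≠ μ m ∧ d = |μ n - μ m|} with hA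
  obtain ⟨j, hj0, hjirr⟩ := hirr
  have hξj : 0 < ξ j := hpos j hj0
  have hmain : ∀ ε : ℝ, 0 < ε → ∃ d ∈ A, d < ε := by
    intro ε hε
    obtain ⟨s, t, hs2, ht2, hne, hlt⟩ := key (ξ j) hξj hjirr (ε / 4) (by positivity)
    set n : Fin N → ℕ+ := fun i =>
      if i = j then ⟨s - 1, by omega⟩ else if i = z0 then ⟨t + 1, by omega⟩ else 1 with hn
    set m : Fin N → ℕ+ := fun i =>
      if i = j then ⟨s + 1, by omega⟩ else if i = z0 then ⟨t - 1, by omega⟩ else 1 with hm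
    have hnz0 : ((n z0 : ℕ) : ℝ) = (t : ℝ) + 1 := by
      simp [hn, hj0.symm]
    have hmz0 : ((m z0 : ℕ) : ℝ) = (t : ℝ) - 1 := by
      simp [hm, hj0.symm]
      push_cast [Nat.cast_sub (by omega : 1 ≤ t)]; ring
    have hnj : ((n j : ℕ) : ℝ) = (s : ℝ) - 1 := by
      simp [hn]; push_cast [Nat.cast_sub (by omega : 1 ≤ s)]; ring
    have hmj : ((m j : ℕ) : ℝ) = (s : ℝ) + 1 := by
      simp [hm]
    have hdiff : μ n - μ m = 4 * ((t : ℝ) - s * ξ j) := by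
      rw [hμ n, hμ m]
      have hsum : ∑ i ∈ Finset.univ.erase z0, ξ i * ((n i : ℕ) : ℝ) ^ 2
          - ∑ i ∈ Finset.univ.erase z0, ξ i * ((m i : ℕ) : ℝ) ^ 2
          = ξ j * (((s:ℝ) - 1) ^ 2 - ((s:ℝ) + 1) ^ 2) := by
        rw [← Finset.sum_sub_distrib]
        rw [Finset.sum_eq_single j]
        · rw [hnj, hmj]; ring
        · intro i hi hij
          have hni : n i = 1 := by simp [hn, hij, Finset.ne_of_mem_erase hi]
          have hmi : m i = 1 := by simp [hm, hij, Finset.ne_of_mem_erase hi]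
          rw [hni, hmi]; ring
        · intro hj
          exact absurd (Finset.mem_erase.mpr ⟨hj0, Finset.mem_univ j⟩) hj
      rw [show ((n z0 : ℕ+) : ℝ) = ((n z0 : ℕ) : ℝ) from rfl] at *
      calc ((n z0 : ℕ):ℝ) ^ 2 + ∑ i ∈ Finset.univ.erase z0, ξ i * ((n i : ℕ):ℝ) ^ 2
          - (((m z0 : ℕ):ℝ) ^ 2 + ∑ i ∈ Finset.univ.erase z0, ξ i * ((m i : ℕ):ℝ) ^ 2)
          = ((n z0 : ℕ):ℝ) ^ 2 - ((m z0 : ℕ):ℝ) ^ 2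
            + (∑ i ∈ Finset.univ.erase z0, ξ i * ((n i : ℕ):ℝ) ^ 2
              - ∑ i ∈ Finset.univ.erase z0, ξ i * ((m i : ℕ):ℝ) ^ 2) := by ring
        _ = ((t:ℝ) + 1) ^ 2 - ((t:ℝ) - 1) ^ 2 + ξ j * (((s:ℝ) - 1) ^ 2 - ((s:ℝ) + 1) ^ 2) := by
            rw [hsum, hnz0, hmz0]
        _ = 4 * ((t : ℝ) - s * ξ j) := by ring
    have hne' : μ n ≠ μ m := by
      intro h
      apply hne
      have : μ n - μ m = 0 := by rw [h]; ring
      rw [hdiff] at this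
      have : (t : ℝ) - s * ξ j = 0 := by linarith
      linarith [this]
    refine ⟨|μ n - μ m|, ⟨n, m, hne', rfl⟩, ?_⟩
    rw [hdiff, abs_mul, abs_of_pos (by norm_num : (0:ℝ) < 4)]
    calc 4 * |(t:ℝ) - s * ξ j| < 4 * (ε / 4) := by gcongr
    _ = ε := by ring
  have hbdd : BddBelow A := ⟨0, by rintro d ⟨p, q, _, rfl⟩; exact abs_nonneg _⟩
  have hnonempty : A.Nonempty := by
    obtain ⟨d, hd, _⟩ := hmain 1 (by norm_num)
    exact ⟨d, hd⟩
  refine le_antisymm ?_ (le_csInf hnonempty ?_)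
  · by_contra h
    push_neg at h
    obtain ⟨d, hd, hdlt⟩ := hmain (sInf A) h
    exact absurd (csInf_le hbdd hd) (not_le.mpr hdlt)
  · rintro d ⟨p, q, _, rfl⟩; exact abs_nonneg _
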